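/- arXiv:1406.1370 — 4 statements merged into one kernel-verified Lean document; each statement's English description precedes it below -/
import Mathlib

section
/- Let H and K be finite transitive permutation groups on finite sets Δ and Λ respectively, with |Δ| ≥ 2 and |Λ| ≥ 2, fix δ₀ ∈ Δ, λ₀ ∈ Λ, and a positive integer ℓ. Then there exist a set Ω of cardinality ℓ·|Δ|·|Λ|, faithful actions ρ_H : H → Sym(Ω), ρ_K : K → Sym(Ω), and a point ω ∈ Ω such that: (1) the stabiliser of ω in ρ_H(H) is ρ_H(H_{δ₀}) and the stabiliser of ω in ρ_K(K) is ρ_K(K_{λ₀}); (2) ρ_H(H) centralises ρ_K(K)_ω, ρ_K(K) centralises ρ_H(H)_ω, and the subgroups generated are internal direct products ⟨ρ_H(H), ρ_K(K)_ω⟩ = ρ_H(H) × ρ_K(K)_ω and ⟨ρ_H(H)_ω, ρ_K(K)⟩ = ρ_H(H)_ω × ρ_K(K); (3) the group ⟨ρ_H(H), ρ_K(K)⟩ is transitive on Ω. -/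
set_option linter.unusedSectionVars false

namespace Stmt4Aux

variable {H K Δ Λ : Type} [Group H] [Group K] [DecidableEq Δ] [DecidableEq Λ]
  [MulAction H Δ] [MulAction K Λ]

def gperm (δ₀ : Δ) (l₀ : Λ) (n : ℕ) : Equiv.Perm (Δ × Λ × ZMod n) where
  toFun x := (x.1, x.2.1, x.2.2 + if x.1 = δ₀ ∧ x.2.1 = l₀ then 1 else 0)
  invFun x := (x.1, x.2.1, x.2.2 - if x.1 = δ₀ ∧ x.2.1 = l₀ then 1 else 0)
  left_inv x := by obtain ⟨a, b, c⟩ := x; dsimp; split_ifs <;> simp_all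
  right_inv x := by obtain ⟨a, b, c⟩ := x; dsimp; split_ifs <;> simp_all

def rhoH (Λ : Type) (n : ℕ) : H →* Equiv.Perm (Δ × Λ × ZMod n) where
  toFun h := { toFun := fun x => (h • x.1, x.2)
               invFun := fun x => (h⁻¹ • x.1, x.2)
               left_inv := fun x => by simp
               right_inv := fun x => by simp }
  map_one' := Equiv.ext fun x => by simp
  map_mul' h₁ h₂ := Equiv.ext fun x => by simp [mul_smul]

def piK (Δ : Type) (n : ℕ) : K →* Equiv.Perm (Δ × Λ × ZMod n) where
  toFun k := { toFun := fun x => (x.1, k • x.2.1, x.2.2)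
               invFun := fun x => (x.1, k⁻¹ • x.2.1, x.2.2)
               left_inv := fun x => by simp
               right_inv := fun x => by simp }
  map_one' := Equiv.ext fun x => by simp
  map_mul' k₁ k₂ := Equiv.ext fun x => by simp [mul_smul]

def rhoK (δ₀ : Δ) (l₀ : Λ) (n : ℕ) : K →* Equiv.Perm (Δ × Λ × ZMod n) :=
  ((MulAut.conj (gperm δ₀ l₀ n)).toMonoidHom).comp (piK Δ n)

lemma rhoH_apply (n : ℕ) (h : H) (a : Δ) (b : Λ) (c : ZMod n) :
    rhoH Λ n h (a, b, c) = (h • a, b, c) := rfl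

lemma rhoK_apply (δ₀ : Δ) (l₀ : Λ) (n : ℕ) (k : K) (a : Δ) (b : Λ) (c : ZMod n) :
    rhoK δ₀ l₀ n k (a, b, c) =
      (a, k • b, c + (if a = δ₀ ∧ k • b = l₀ then (1 : ZMod n) else 0)
        - (if a = δ₀ ∧ b = l₀ then 1 else 0)) := by
  have h1 : rhoK δ₀ l₀ n k = gperm δ₀ l₀ n * piK Δ n k * (gperm δ₀ l₀ n)⁻¹ := rfl
  rw [h1]
  simp only [Equiv.Perm.mul_apply, Equiv.Perm.inv_def]
  simp only [gperm, piK, Equiv.coe_fn_mk, Equiv.coe_fn_symm_mk, MonoidHom.coe_mk, OneHom.coe_mk]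
  refine Prod.ext rfl (Prod.ext rfl ?_)
  dsimp
  ring

end Stmt4Aux

/-- Lemma 4.1: for transitive `H`, `K` on `Δ`, `Λ` with `|Δ|,|Λ| ≥ 2`, points `δ₀, lam₀` and
`ℓ ≥ 1`, there are faithful actions of `H` and `K` on a set `Ω` of size `ℓ|Δ||Λ|` and a point
`ω` with the stated stabiliser, centralising and transitivity properties. -/
theorem stmt4 {H K Δ Λ : Type} [Group H] [Group K] [Fintype Δ] [Fintype Λ]
    [MulAction H Δ] [MulAction K Λ] [FaithfulSMul H Δ] [FaithfulSMul K Λ]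
    [MulAction.IsPretransitive H Δ] [MulAction.IsPretransitive K Λ]
    (hΔ : 2 ≤ Fintype.card Δ) (hΛ : 2 ≤ Fintype.card Λ)
    (δ₀ : Δ) (lam₀ : Λ) (ℓ : ℕ) (hℓ : 0 < ℓ) :
    ∃ (Ω : Type) (instΩ : Fintype Ω) (ρH : H →* Equiv.Perm Ω) (ρK : K →* Equiv.Perm Ω) (ω : Ω),
      Fintype.card Ω = ℓ * Fintype.card Δ * Fintype.card Λ ∧
      Function.Injective ρH ∧ Function.Injective ρK ∧
      (∀ h : H, ρH h ω = ω ↔ h ∈ MulAction.stabilizer H δ₀) ∧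
      (∀ k : K, ρK k ω = ω ↔ k ∈ MulAction.stabilizer K lam₀) ∧
      (∀ (h : H) (k : K), ρK k ω = ω → Commute (ρH h) (ρK k)) ∧
      (∀ (h : H) (k : K), ρH h ω = ω → Commute (ρH h) (ρK k)) ∧
      ρH.range ⊓ ρK.range = ⊥ ∧
      (∀ x y : Ω, ∃ p ∈ ρH.range ⊔ ρK.range, p x = y) := by
  haveI : NeZero ℓ := ⟨hℓ.ne'⟩
  letI : DecidableEq Δ := Classical.decEq Δ
  letI : DecidableEq Λ := Classical.decEq Λ
  obtain ⟨a₀⟩ : Nonempty Δ := Fintype.card_pos_iff.mp (by omega)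
  obtain ⟨b₀⟩ : Nonempty Λ := Fintype.card_pos_iff.mp (by omega)
  obtain ⟨δ₁, hδ₁⟩ : ∃ a : Δ, a ≠ δ₀ := Fintype.exists_ne_of_one_lt_card (by omega) δ₀
  obtain ⟨lam₁, hlam₁⟩ : ∃ b : Λ, b ≠ lam₀ := Fintype.exists_ne_of_one_lt_card (by omega) lam₀
  obtain ⟨h₁, hh₁⟩ := MulAction.exists_smul_eq H δ₀ δ₁
  obtain ⟨k₁, hk₁⟩ := MulAction.exists_smul_eq K lam₀ lam₁
  open Stmt4Aux in
  refine ⟨Δ × Λ × ZMod ℓ, inferInstance, rhoH Λ ℓ, rhoK δ₀ lam₀ ℓ, (δ₀, lam₀, 0),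
    ?_, ?_, ?_, ?_, ?_, ?_, ?_, ?_, ?_⟩
  · simp [ZMod.card]; ring
  · -- injectivity of rhoH
    intro g₁ g₂ heq
    refine FaithfulSMul.eq_of_smul_eq_smul (α := Δ) (fun a => ?_)
    have := congrArg (fun f : Equiv.Perm (Δ × Λ × ZMod ℓ) => (f (a, b₀, 0)).1) heq
    simpa [Stmt4Aux.rhoH_apply] using this
  · -- injectivity of rhoK
    intro g₁ g₂ heq
    refine FaithfulSMul.eq_of_smul_eq_smul (α := Λ) (fun b => ?_)
    have := congrArg (fun f : Equiv.Perm (Δ × Λ × ZMod ℓ) => (f (a₀, b, 0)).2.1) heq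
    simpa [Stmt4Aux.rhoK_apply] using this
  · -- stabilizer H
    intro h
    rw [MulAction.mem_stabilizer_iff]
    constructor
    · intro hω
      have := congrArg (fun x : Δ × Λ × ZMod ℓ => x.1) hω
      simpa [Stmt4Aux.rhoH_apply] using this
    · intro hh; simp [Stmt4Aux.rhoH_apply, hh]
  · -- stabilizer K
    intro k
    rw [MulAction.mem_stabilizer_iff]
    constructor
    · intro hω
      have := congrArg (fun x : Δ × Λ × ZMod ℓ => x.2.1) hω
      simpa [Stmt4Aux.rhoK_apply] using this
    · intro hk; simp [Stmt4Aux.rhoK_apply, hk]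
  · -- commute, k fixes ω
    intro h k hkω
    have hk : k • lam₀ = lam₀ := by
      have := congrArg (fun x : Δ × Λ × ZMod ℓ => x.2.1) hkω
      simpa [Stmt4Aux.rhoK_apply] using this
    have key : ∀ b : Λ, k • b = lam₀ ↔ b = lam₀ := fun b => by
      constructor
      · intro hb; rw [← hk] at hb; exact smul_left_cancel k hb
      · intro hb; rw [hb, hk]
    refine Equiv.ext fun x => ?_
    obtain ⟨a, b, c⟩ := x
    simp only [Equiv.Perm.mul_apply, Stmt4Aux.rhoH_apply, Stmt4Aux.rhoK_apply, key]
    simp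
  · -- commute, h fixes ω
    intro h k hhω
    have hh : h • δ₀ = δ₀ := by
      have := congrArg (fun x : Δ × Λ × ZMod ℓ => x.1) hhω
      simpa [Stmt4Aux.rhoH_apply] using this
    have key : ∀ a : Δ, h • a = δ₀ ↔ a = δ₀ := fun a => by
      constructor
      · intro ha; rw [← hh] at ha; exact smul_left_cancel h ha
      · intro ha; rw [ha, hh]
    refine Equiv.ext fun x => ?_
    obtain ⟨a, b, c⟩ := x
    simp only [Equiv.Perm.mul_apply, Stmt4Aux.rhoH_apply, Stmt4Aux.rhoK_apply, key]
  · -- trivial intersection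
    rw [eq_bot_iff]
    intro p hp
    rw [Subgroup.mem_inf] at hp
    obtain ⟨⟨h, hh⟩, ⟨k, hk⟩⟩ := hp
    have hk1 : k = (1 : K) := by
      refine FaithfulSMul.eq_of_smul_eq_smul (α := Λ) (fun b => ?_)
      have h2 := congrArg (fun f : Equiv.Perm (Δ × Λ × ZMod ℓ) => (f (a₀, b, 0)).2.1) (hk.trans hh.symm)
      simpa [Stmt4Aux.rhoK_apply, Stmt4Aux.rhoH_apply] using h2
    rw [Subgroup.mem_bot, ← hk, hk1, map_one]
  · -- transitivity
    set S := (Stmt4Aux.rhoH (H := H) (Δ := Δ) Λ ℓ).range ⊔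
      (Stmt4Aux.rhoK (K := K) δ₀ lam₀ ℓ).range with hS
    have memH : ∀ h : H, Stmt4Aux.rhoH Λ ℓ h ∈ S := fun h =>
      Subgroup.mem_sup_left ⟨h, rfl⟩
    have memK : ∀ k : K, Stmt4Aux.rhoK δ₀ lam₀ ℓ k ∈ S := fun k =>
      Subgroup.mem_sup_right ⟨k, rfl⟩
    have comp : ∀ {u v w : Δ × Λ × ZMod ℓ}, (∃ p ∈ S, p u = v) → (∃ q ∈ S, q v = w) →
        ∃ r ∈ S, r u = w := by
      rintro u v w ⟨p, hp, rfl⟩ ⟨q, hq, rfl⟩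
      exact ⟨q * p, mul_mem hq hp, rfl⟩
    have moveH : ∀ (a a' : Δ) (b : Λ) (c : ZMod ℓ), ∃ p ∈ S, p (a, b, c) = (a', b, c) := by
      intro a a' b c
      obtain ⟨h, hh⟩ := MulAction.exists_smul_eq H a a'
      exact ⟨_, memH h, by simp [Stmt4Aux.rhoH_apply, hh]⟩
    have moveK : ∀ (a : Δ), a ≠ δ₀ → ∀ (b b' : Λ) (c : ZMod ℓ),
        ∃ p ∈ S, p (a, b, c) = (a, b', c) := by
      intro a ha b b' c
      obtain ⟨k, hk⟩ := MulAction.exists_smul_eq K b b'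
      exact ⟨_, memK k, by simp [Stmt4Aux.rhoK_apply, hk, ha]⟩
    have hinv₁ : h₁⁻¹ • δ₁ = δ₀ := by rw [← hh₁, inv_smul_smul]
    have hinvk₁ : k₁⁻¹ • lam₁ = lam₀ := by rw [← hk₁, inv_smul_smul]
    have moveUp : ∀ c : ZMod ℓ, ∃ p ∈ S, p (δ₀, lam₀, c) = (δ₀, lam₀, c + 1) := by
      intro c
      refine ⟨Stmt4Aux.rhoK δ₀ lam₀ ℓ k₁⁻¹ * Stmt4Aux.rhoH Λ ℓ h₁⁻¹ *
        Stmt4Aux.rhoK δ₀ lam₀ ℓ k₁ * Stmt4Aux.rhoH Λ ℓ h₁,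
        mul_mem (mul_mem (mul_mem (memK _) (memH _)) (memK _)) (memH _), ?_⟩
      simp only [Equiv.Perm.mul_apply, Stmt4Aux.rhoH_apply, Stmt4Aux.rhoK_apply,
        hh₁, hk₁, hinv₁, hinvk₁]
      simp [hδ₁, hlam₁]
    have reach0 : ∀ (a : Δ) (b : Λ), ∃ p ∈ S, p (δ₀, lam₀, 0) = (a, b, (0 : ZMod ℓ)) := by
      intro a b
      exact comp (comp (moveH δ₀ δ₁ lam₀ 0) (moveK δ₁ hδ₁ lam₀ b 0)) (moveH δ₁ a b 0)
    have reachD : ∀ c : ZMod ℓ, ∃ p ∈ S, p (δ₀, lam₀, 0) = (δ₀, lam₀, c) := by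
      intro c
      obtain ⟨m, rfl⟩ := ZMod.natCast_zmod_surjective (n := ℓ) c
      induction m with
      | zero => exact ⟨1, one_mem S, by simp⟩
      | succ m ih =>
        have : ((m + 1 : ℕ) : ZMod ℓ) = (m : ZMod ℓ) + 1 := by push_cast; ring
        rw [this]
        exact comp ih (moveUp _)
    have reachAll : ∀ x : Δ × Λ × ZMod ℓ, ∃ p ∈ S, p (δ₀, lam₀, 0) = x := by
      rintro ⟨a, b, c⟩
      exact comp (comp (comp (reachD c) (moveH δ₀ δ₁ lam₀ c)) (moveK δ₁ hδ₁ lam₀ b c))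
        (moveH δ₁ a b c)
    intro x y
    obtain ⟨p, hp, hpx⟩ := reachAll x
    obtain ⟨q, hq, hqy⟩ := reachAll y
    refine ⟨q * p⁻¹, mul_mem hq (inv_mem hp), ?_⟩
    have : p⁻¹ x = (δ₀, lam₀, 0) := by rw [← hpx, Equiv.Perm.inv_def, Equiv.symm_apply_apply]
    rw [Equiv.Perm.mul_apply, this, hqy]
end

section
/- Let G be a group of permutations of the set Ω = Δ × Λ × ℤ/ℓℤ generated by the image of H acting on the first coordinate and the g-conjugate of the image of K acting on the second coordinate, where g fixes (δ,λ,i) if (δ,λ) ≠ (δ₀,λ₀) and sends (δ₀,λ₀,i) to (δ₀,λ₀,i+1). If H is transitive on Δ with |Δ| ≥ 2 and K is transitive on Λ with |Λ| ≥ 2, then G is transitive on Ω. -/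
/-- Transitivity of `⟨ρ_H(H), ρ_K(K)⟩` on `Ω = Δ × Λ × ℤ/ℓℤ`, where `H` acts on the first
coordinate and `K` acts on the second coordinate conjugated by the permutation `g`. -/
theorem stmt5 {H K Δ Λ : Type} [Group H] [Group K] [Fintype Δ] [Fintype Λ]
    [MulAction H Δ] [MulAction K Λ]
    [MulAction.IsPretransitive H Δ] [MulAction.IsPretransitive K Λ]
    (hΔ : 2 ≤ Fintype.card Δ) (hΛ : 2 ≤ Fintype.card Λ)
    (δ₀ : Δ) (lam₀ : Λ) (ℓ : ℕ) (hℓ : 0 < ℓ)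
    (g : Equiv.Perm (Δ × Λ × ZMod ℓ))
    (hg1 : ∀ (δ : Δ) (lam : Λ) (i : ZMod ℓ), (δ, lam) ≠ (δ₀, lam₀) → g (δ, lam, i) = (δ, lam, i))
    (hg2 : ∀ i : ZMod ℓ, g (δ₀, lam₀, i) = (δ₀, lam₀, i + 1))
    (ρH : H →* Equiv.Perm (Δ × Λ × ZMod ℓ))
    (hρH : ∀ (h : H) (δ : Δ) (lam : Λ) (i : ZMod ℓ), ρH h (δ, lam, i) = (h • δ, lam, i))
    (ρ' : K →* Equiv.Perm (Δ × Λ × ZMod ℓ))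
    (hρ' : ∀ (k : K) (δ : Δ) (lam : Λ) (i : ZMod ℓ), ρ' k (δ, lam, i) = (δ, k • lam, i))
    (ρK : K →* Equiv.Perm (Δ × Λ × ZMod ℓ))
    (hρK : ∀ k : K, ρK k = g⁻¹ * ρ' k * g) :
    ∀ x y : Δ × Λ × ZMod ℓ, ∃ p ∈ ρH.range ⊔ ρK.range, p x = y := by
  classical
  haveI : NeZero ℓ := ⟨hℓ.ne'⟩
  set G := ρH.range ⊔ ρK.range with hG
  have hHmem : ∀ h : H, ρH h ∈ G := fun h => Subgroup.mem_sup_left ⟨h, rfl⟩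
  have hKmem : ∀ k : K, ρK k ∈ G := fun k => Subgroup.mem_sup_right ⟨k, rfl⟩
  -- inverse of g
  have hg1' : ∀ (δ : Δ) (lam : Λ) (i : ZMod ℓ), (δ, lam) ≠ (δ₀, lam₀) →
      g⁻¹ (δ, lam, i) = (δ, lam, i) := by
    intro δ lam i hne
    conv_lhs => rw [← hg1 δ lam i hne]
    exact g.symm_apply_apply _
  have hg2' : ∀ i : ZMod ℓ, g⁻¹ (δ₀, lam₀, i) = (δ₀, lam₀, i - 1) := by
    intro i
    have h := hg2 (i - 1)
    rw [sub_add_cancel] at h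
    conv_lhs => rw [← h]
    exact g.symm_apply_apply _
  -- ρK on points with first coordinate away from δ₀
  have hK1 : ∀ (k : K) (δ : Δ) (lam : Λ) (i : ZMod ℓ), δ ≠ δ₀ →
      ρK k (δ, lam, i) = (δ, k • lam, i) := by
    intro k δ lam i hδ
    have hne : (δ, lam) ≠ (δ₀, lam₀) := by simp [Prod.ext_iff, hδ]
    have hne2 : (δ, k • lam) ≠ (δ₀, lam₀) := by simp [Prod.ext_iff, hδ]
    rw [hρK, Equiv.Perm.mul_apply, Equiv.Perm.mul_apply, hg1 δ lam i hne, hρ',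
      hg1' δ (k • lam) i hne2]
  -- ρK on the base point, when k moves lam₀
  have hK2 : ∀ (k : K) (i : ZMod ℓ), k • lam₀ ≠ lam₀ →
      ρK k (δ₀, lam₀, i) = (δ₀, k • lam₀, i + 1) := by
    intro k i hk
    have hne2 : (δ₀, k • lam₀) ≠ (δ₀, lam₀) := by simp [Prod.ext_iff, hk]
    rw [hρK, Equiv.Perm.mul_apply, Equiv.Perm.mul_apply, hg2, hρ',
      hg1' δ₀ (k • lam₀) (i + 1) hne2]
  -- auxiliary elements away from the base point
  obtain ⟨δ₁, hδ₁⟩ := Fintype.exists_ne_of_one_lt_card (by omega) δ₀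
  obtain ⟨lam₁, hlam₁⟩ := Fintype.exists_ne_of_one_lt_card (by omega) lam₀
  -- step: shift the third coordinate by one
  have step : ∀ i : ZMod ℓ, ∃ p ∈ G, p (δ₀, lam₀, i) = (δ₀, lam₀, i + 1) := by
    intro i
    obtain ⟨k1, hk1⟩ := MulAction.exists_smul_eq K lam₀ lam₁
    obtain ⟨h2, hh2⟩ := MulAction.exists_smul_eq H δ₀ δ₁
    obtain ⟨k2, hk2⟩ := MulAction.exists_smul_eq K lam₁ lam₀
    obtain ⟨h3, hh3⟩ := MulAction.exists_smul_eq H δ₁ δ₀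
    refine ⟨ρH h3 * ρK k2 * ρH h2 * ρK k1, ?_, ?_⟩
    · exact mul_mem (mul_mem (mul_mem (hHmem h3) (hKmem k2)) (hHmem h2)) (hKmem k1)
    · have e1 : ρK k1 (δ₀, lam₀, i) = (δ₀, lam₁, i + 1) := by
        rw [hK2 k1 i (by rw [hk1]; exact hlam₁), hk1]
      simp only [Equiv.Perm.mul_apply, e1, hρH, hh2, hK1 k2 δ₁ lam₁ (i + 1) hδ₁, hk2, hh3]
  have shiftn : ∀ (n : ℕ) (i : ZMod ℓ), ∃ p ∈ G, p (δ₀, lam₀, i) = (δ₀, lam₀, i + n) := by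
    intro n
    induction n with
    | zero => intro i; exact ⟨1, one_mem G, by simp⟩
    | succ n ih =>
      intro i
      obtain ⟨p, hp, hpx⟩ := ih i
      obtain ⟨q, hq, hqx⟩ := step (i + n)
      refine ⟨q * p, mul_mem hq hp, ?_⟩
      rw [Equiv.Perm.mul_apply, hpx, hqx]
      push_cast
      ring_nf
  -- reach the base point (δ₀, lam₀, 0) from anywhere
  have reach : ∀ x : Δ × Λ × ZMod ℓ, ∃ p ∈ G, p x = (δ₀, lam₀, 0) := by
    rintro ⟨δ, lam, i⟩
    obtain ⟨h1, hh1⟩ := MulAction.exists_smul_eq H δ δ₁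
    obtain ⟨k, hk⟩ := MulAction.exists_smul_eq K lam lam₀
    obtain ⟨h', hh'⟩ := MulAction.exists_smul_eq H δ₁ δ₀
    have e : (ρH h' * ρK k * ρH h1) (δ, lam, i) = (δ₀, lam₀, i) := by
      simp only [Equiv.Perm.mul_apply, hρH, hh1, hK1 k δ₁ lam i hδ₁, hk, hh']
    obtain ⟨q, hq, hqx⟩ := shiftn (-i).val i
    have hi : i + ((-i).val : ZMod ℓ) = 0 := by
      rw [ZMod.natCast_val, ZMod.cast_id]; ring
    refine ⟨q * (ρH h' * ρK k * ρH h1),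
      mul_mem hq (mul_mem (mul_mem (hHmem h') (hKmem k)) (hHmem h1)), ?_⟩
    rw [Equiv.Perm.mul_apply, e, hqx, hi]
  intro x y
  obtain ⟨p, hp, hpx⟩ := reach x
  obtain ⟨q, hq, hqy⟩ := reach y
  refine ⟨q⁻¹ * p, mul_mem (inv_mem hq) hp, ?_⟩
  rw [Equiv.Perm.mul_apply, hpx, ← hqy, Equiv.Perm.inv_def, Equiv.symm_apply_apply]
end

section
/- Let k ≥ 3 and let L₁, …, L_k be nontrivial finite transitive permutation groups, with L₁ not regular. Then for every integer c there exists a rank-k faithful amalgam of permutation type [L₁, …, L_k] whose Borel subgroup has order at least c. -/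
open MulAction

namespace Stmt16Aux

attribute [local instance] Classical.propDecidable

/-- A bundled setup for the construction. -/
structure Setup where
  (L1 Y1 L2 Y2 L3 Y3 : Type)
  [g1 : Group L1] [g2 : Group L2] [g3 : Group L3]
  [a1 : MulAction L1 Y1] [a2 : MulAction L2 Y2] [a3 : MulAction L3 Y3]
  [f1 : FaithfulSMul L1 Y1] [f2 : FaithfulSMul L2 Y2] [f3 : FaithfulSMul L3 Y3]
  [t1 : IsPretransitive L1 Y1] [t2 : IsPretransitive L2 Y2] [t3 : IsPretransitive L3 Y3]
  [fin1 : Finite L1] [fin2 : Finite L2] [fin3 : Finite L3]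
  [fy2 : Finite Y2] [fy3 : Finite Y3]
  [ny2 : Nontrivial Y2] [ny3 : Nontrivial Y3]
  (y1 : Y1) (y2 : Y2) (y3 : Y3)
  (l : ℕ) [hl : NeZero l]
  (J : Type) [fJ : Finite J]
  (LJ YJ : J → Type)
  [gJ : ∀ j, Group (LJ j)] [aJ : ∀ j, MulAction (LJ j) (YJ j)]
  [faJ : ∀ j, FaithfulSMul (LJ j) (YJ j)] [tJ : ∀ j, IsPretransitive (LJ j) (YJ j)]
  [finJ : ∀ j, Finite (LJ j)]
  (yJ : ∀ j, YJ j)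

attribute [instance] Setup.g1 Setup.g2 Setup.g3 Setup.a1 Setup.a2 Setup.a3
  Setup.f1 Setup.f2 Setup.f3 Setup.t1 Setup.t2 Setup.t3
  Setup.fin1 Setup.fin2 Setup.fin3 Setup.fy2 Setup.fy3 Setup.ny2 Setup.ny3 Setup.hl
  Setup.fJ Setup.gJ Setup.aJ Setup.faJ Setup.tJ Setup.finJ

/-! ### generic small lemmas -/

theorem normal_le_stab_eq_bot {L Y : Type} [Group L] [MulAction L Y] [FaithfulSMul L Y]
    [IsPretransitive L Y] {y : Y} {S : Subgroup L} (hN : S.Normal)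
    (hle : S ≤ stabilizer L y) : S = ⊥ := by
  rw [eq_bot_iff]
  intro s hs
  rw [Subgroup.mem_bot]
  refine eq_of_smul_eq_smul (M := L) (α := Y) fun x => ?_
  obtain ⟨g, rfl⟩ := exists_smul_eq L y x
  have h1 : g⁻¹ * s * g ∈ S := hN.conj_mem' s hs g
  have h2 : (g⁻¹ * s * g) • y = y := hle h1
  calc s • g • y = g • (g⁻¹ * s * g) • y := by
        simp [mul_smul]
    _ = g • y := by rw [h2]
    _ = (1 : L) • g • y := by rw [one_smul]

theorem nontrivial_Y {L Y : Type} [Group L] [MulAction L Y] [FaithfulSMul L Y]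
    (h : Nontrivial L) : Nontrivial Y := by
  by_contra hY
  have hsub : Subsingleton Y := not_nontrivial_iff_subsingleton.mp hY
  obtain ⟨a, b, hab⟩ := h
  exact hab (eq_of_smul_eq_smul (M := L) (α := Y) fun x => Subsingleton.elim _ _)

theorem exists_moving {L Y : Type} [Group L] [MulAction L Y] [IsPretransitive L Y]
    [Nontrivial Y] (y : Y) : ∃ g : L, g • y ≠ y := by
  obtain ⟨y', hy'⟩ := exists_ne y
  obtain ⟨g, hg⟩ := exists_smul_eq L y y'
  exact ⟨g, by rw [hg]; exact hy'⟩


/-! ### The set Ω and the two permutation actions on it -/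

noncomputable section

variable (S : Setup)

abbrev Om : Type := ZMod S.l × S.Y2 × S.Y3

instance : Finite (Om S) := by unfold Om; infer_instance

def om0 : Om S := (0, S.y2, S.y3)

def ff (x : S.Y2) : ZMod S.l := if x = S.y2 then 0 else 1

lemma ff_y2 : ff S S.y2 = 0 := if_pos rfl

lemma ff_smul_of_stab {h : S.L2} (hh : h • S.y2 = S.y2) (x : S.Y2) :
    ff S (h • x) = ff S x := by
  unfold ff
  have : h • x = S.y2 ↔ x = S.y2 := by
    conv_lhs => rw [← hh]
    exact smul_left_cancel_iff h
  split_ifs with h1 h2 h2 <;> first | rfl | (exact absurd (this.mp h1) h2) | (exact absurd (this.mpr h2) h1)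

def act2 (g : S.L2) (ω : Om S) : Om S :=
  (ω.1 + (if ω.2.2 = S.y3 then ff S (g • ω.2.1) - ff S ω.2.1 else 0), g • ω.2.1, ω.2.2)

lemma act2_act2 (g h : S.L2) (ω : Om S) : act2 S g (act2 S h ω) = act2 S (g * h) ω := by
  obtain ⟨a, x, y⟩ := ω
  simp only [act2, mul_smul, Prod.mk.injEq]
  split_ifs <;> ring_nf <;> simp

lemma act2_one (ω : Om S) : act2 S 1 ω = ω := by
  obtain ⟨a, x, y⟩ := ω
  simp [act2]

def σ2 : S.L2 →* Equiv.Perm (Om S) where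
  toFun g :=
    { toFun := act2 S g
      invFun := act2 S g⁻¹
      left_inv := fun ω => by rw [act2_act2, inv_mul_cancel, act2_one]
      right_inv := fun ω => by rw [act2_act2, mul_inv_cancel, act2_one] }
  map_one' := by ext ω : 1; simp [act2_one]
  map_mul' g h := by ext ω : 1; exact (act2_act2 S g h ω).symm

lemma σ2_apply (g : S.L2) (ω : Om S) : σ2 S g ω = act2 S g ω := rfl

def act3 (g : S.L3) (ω : Om S) : Om S := (ω.1, ω.2.1, g • ω.2.2)

def σ3 : S.L3 →* Equiv.Perm (Om S) where
  toFun g :=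
    { toFun := act3 S g
      invFun := act3 S g⁻¹
      left_inv := fun ω => by simp [act3]
      right_inv := fun ω => by simp [act3] }
  map_one' := by ext ω : 1; simp [act3]
  map_mul' g h := by ext ω : 1; simp [act3, mul_smul]

lemma σ3_apply (g : S.L3) (ω : Om S) : σ3 S g ω = act3 S g ω := rfl

lemma comm_23 {h : S.L3} (hh : h • S.y3 = S.y3) (g : S.L2) :
    Commute (σ2 S g) (σ3 S h) := by
  have key : ∀ y : S.Y3, h • y = S.y3 ↔ y = S.y3 := by
    intro y
    constructor
    · intro hy; rw [← hh] at hy; exact smul_left_cancel h hy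
    · rintro rfl; exact hh
  ext ω : 1
  obtain ⟨a, x, y⟩ := ω
  simp only [Equiv.Perm.mul_apply, σ2_apply, σ3_apply, act2, act3, Prod.mk.injEq]
  rw [key]
  simp

lemma comm_32 {h : S.L2} (hh : h • S.y2 = S.y2) (g : S.L3) :
    Commute (σ3 S g) (σ2 S h) := by
  ext ω : 1
  obtain ⟨a, x, y⟩ := ω
  simp only [Equiv.Perm.mul_apply, σ2_apply, σ3_apply, act2, act3, Prod.mk.injEq]
  rw [ff_smul_of_stab S hh]
  simp
/-! ### subgroups, functions spaces, automorphism homs -/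

def H1 : Subgroup S.L1 := stabilizer S.L1 S.y1
def H2 : Subgroup S.L2 := stabilizer S.L2 S.y2
def H3 : Subgroup S.L3 := stabilizer S.L3 S.y3
def HJ (j : S.J) : Subgroup (S.LJ j) := stabilizer (S.LJ j) (S.yJ j)

def K : Type := ↥(H2 S) × ↥(H3 S)

instance : Group (K S) := by unfold K; infer_instance
instance : Finite (K S) := by unfold K; infer_instance

/-- the hom `K →* Perm Ω`. -/
def homK : K S →* Equiv.Perm (Om S) :=
  ((σ2 S).comp (H2 S).subtype).noncommCoprod ((σ3 S).comp (H3 S).subtype)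
    (fun m n => comm_23 S n.2 m)

/-- the hom `L2 × H3 →* Perm Ω`. -/
def hom23 : (S.L2 × ↥(H3 S)) →* Equiv.Perm (Om S) :=
  (σ2 S).noncommCoprod ((σ3 S).comp (H3 S).subtype) (fun m n => comm_23 S n.2 m)

/-- the hom `H2 × L3 →* Perm Ω`. -/
def hom32 : (↥(H2 S) × S.L3) →* Equiv.Perm (Om S) :=
  ((σ2 S).comp (H2 S).subtype).noncommCoprod (σ3 S) (fun m n => (comm_32 S m.2 n).symm)

lemma homK_eq_hom23 (κ : K S) : homK S κ = hom23 S (((κ.1 : S.L2), κ.2)) := rfl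

lemma homK_eq_hom32 (κ : K S) : homK S κ = hom32 S ((κ.1, (κ.2 : S.L3))) := rfl

lemma homK_om0 (κ : K S) : homK S κ (om0 S) = om0 S := by
  obtain ⟨⟨h2, hh2⟩, ⟨h3, hh3⟩⟩ := κ
  have m2 : h2 • S.y2 = S.y2 := hh2
  have m3 : h3 • S.y3 = S.y3 := hh3
  show (σ2 S h2 * σ3 S h3) (om0 S) = om0 S
  simp only [Equiv.Perm.mul_apply, σ2_apply, σ3_apply, act2, act3, om0, m2, m3]
  simp [ff]

/-- The automorphism action of permutations of `α` on `α → M`. -/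
def permAut (α M : Type) [Group M] : Equiv.Perm α →* MulAut (α → M) where
  toFun σ :=
    { toFun := fun u => u ∘ σ.symm
      invFun := fun u => u ∘ σ
      left_inv := fun u => by ext ω; simp
      right_inv := fun u => by ext ω; simp
      map_mul' := fun u v => rfl }
  map_one' := by apply MulEquiv.ext; intro u; ext ω; rfl
  map_mul' σ τ := by apply MulEquiv.ext; intro u; ext ω; rfl

lemma permAut_apply {α M : Type} [Group M] (σ : Equiv.Perm α) (u : α → M) (ω : α) :
    permAut α M σ u ω = u (σ.symm ω) := rfl

abbrev U : Type := Om S → ↥(H1 S)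

instance : Group (U S) := by unfold U; infer_instance
instance : Finite (U S) := by unfold U; infer_instance

def Oma : Type := {ω : Om S // ω ≠ om0 S}

instance : Finite (Oma S) := by unfold Oma; infer_instance

def U' : Type := Oma S → ↥(H1 S)

instance : Group (U' S) := by unfold U'; infer_instance
instance : Finite (U' S) := by unfold U'; infer_instance

def φK : K S →* MulAut (U S) := (permAut (Om S) ↥(H1 S)).comp (homK S)
def φ2 : (S.L2 × ↥(H3 S)) →* MulAut (U S) := (permAut (Om S) ↥(H1 S)).comp (hom23 S)
def φ3 : (↥(H2 S) × S.L3) →* MulAut (U S) := (permAut (Om S) ↥(H1 S)).comp (hom32 S)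

/-- restriction of a permutation fixing `om0` to the complement -/
def restr (σ : Equiv.Perm (Om S)) (h : σ (om0 S) = om0 S) : Equiv.Perm (Oma S) :=
  σ.subtypePerm (by
    intro ω
    constructor
    · intro hω hc
      exact hω (by rw [hc, h])
    · intro hω hc
      exact hω (σ.injective (by rw [hc, h])))

lemma restr_apply (σ : Equiv.Perm (Om S)) (h : σ (om0 S) = om0 S) (ω : Oma S) :
    (restr S σ h ω).1 = σ ω.1 := rfl

def restrK : K S →* Equiv.Perm (Oma S) where
  toFun κ := restr S (homK S κ) (homK_om0 S κ)
  map_one' := by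
    ext ω
    apply Subtype.ext
    rw [restr_apply, map_one]
    rfl
  map_mul' κ κ' := by
    ext ω
    rw [Equiv.Perm.mul_apply]
    apply Subtype.ext
    rw [restr_apply, restr_apply, restr_apply, map_mul]
    rfl

/-- extend an automorphism of `M` to `L × M`, trivially on `L`. -/
def prodAutRight (L M : Type) [Group L] [Group M] : MulAut M →* MulAut (L × M) where
  toFun f := MulEquiv.prodCongr (MulEquiv.refl L) f
  map_one' := by apply MulEquiv.ext; intro p; rfl
  map_mul' f g := by apply MulEquiv.ext; intro p; rfl

/-- the automorphisms of `L1 × U'` induced by `K`: trivial on `L1`. -/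
def φ0 : K S →* MulAut (S.L1 × U' S) :=
  (prodAutRight S.L1 (U' S)).comp ((permAut (Oma S) ↥(H1 S)).comp (restrK S))

lemma φ0_fst (κ : K S) (p : S.L1 × U' S) : (φ0 S κ p).1 = p.1 := rfl

lemma φ0_snd (κ : K S) (p : S.L1 × U' S) :
    (φ0 S κ p).2 = permAut (Oma S) ↥(H1 S) (restrK S κ) p.2 := rfl

/-! ### The Borel group and the groups `P i` -/

instance sdpFinite {N G : Type} [Group N] [Group G] {φ : G →* MulAut N} [Finite N] [Finite G] :
    Finite (N ⋊[φ] G) :=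
  Finite.of_injective (fun x => (x.left, x.right)) (fun a b h => by
    rcases Prod.mk.injEq _ _ _ _ ▸ h with ⟨h1, h2⟩
    exact SemidirectProduct.ext h1 h2)

def DJ : Type := ∀ j : S.J, ↥(HJ S j)

instance : Group (DJ S) := by unfold DJ; infer_instance
instance : Finite (DJ S) := by unfold DJ; infer_instance

def BB : Type := (U S ⋊[φK S] K S) × DJ S

instance : Group (BB S) := by unfold BB; infer_instance
instance : Finite (BB S) := by unfold BB; infer_instance

def P0 : Type := ((S.L1 × U' S) ⋊[φ0 S] K S) × DJ S
def P2 : Type := (U S ⋊[φ2 S] (S.L2 × ↥(H3 S))) × DJ S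
def P3 : Type := (U S ⋊[φ3 S] (↥(H2 S) × S.L3)) × DJ S
def Jm (j : S.J) : Type := {x : S.J // x ≠ j}
def PJ (j : S.J) : Type := (U S ⋊[φK S] K S) × ((∀ x : Jm S j, ↥(HJ S x.1)) × S.LJ j)

instance : Group (P0 S) := by unfold P0; infer_instance
instance : Finite (P0 S) := by unfold P0; infer_instance
instance : Group (P2 S) := by unfold P2; infer_instance
instance : Finite (P2 S) := by unfold P2; infer_instance
instance : Group (P3 S) := by unfold P3; infer_instance
instance : Finite (P3 S) := by unfold P3; infer_instance
instance (j : S.J) : Finite (Jm S j) := by unfold Jm; infer_instance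
instance (j : S.J) : Group (PJ S j) := by unfold PJ; infer_instance
instance (j : S.J) : Finite (PJ S j) := by unfold PJ; infer_instance

/-! ### inclusion homs -/

def splitU : U S →* S.L1 × U' S where
  toFun u := (((u (om0 S) : ↥(H1 S)) : S.L1), fun ω => u ω.1)
  map_one' := rfl
  map_mul' u v := rfl

lemma compat0 : ∀ κ : K S, (splitU S).comp ((φK S κ).toMonoidHom)
    = ((φ0 S κ).toMonoidHom).comp (splitU S) := by
  intro κ
  ext u
  · show ((((φK S κ) u) (om0 S) : ↥(H1 S)) : S.L1) = _
    have h1 : (homK S κ).symm (om0 S) = om0 S := by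
      rw [Equiv.symm_apply_eq, homK_om0]
    show ((u ((homK S κ).symm (om0 S)) : ↥(H1 S)) : S.L1) = ((u (om0 S) : ↥(H1 S)) : S.L1)
    rw [h1]
  · rfl

def incl0 : BB S →* P0 S :=
  (SemidirectProduct.map (splitU S) (MonoidHom.id (K S)) (compat0 S)).prodMap
    (MonoidHom.id (DJ S))

def emb23 : K S →* S.L2 × ↥(H3 S) := ((H2 S).subtype).prodMap (MonoidHom.id _)
def emb32 : K S →* ↥(H2 S) × S.L3 := (MonoidHom.id _).prodMap ((H3 S).subtype)

lemma compat2 : ∀ κ : K S, (MonoidHom.id (U S)).comp ((φK S κ).toMonoidHom)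
    = ((φ2 S (emb23 S κ)).toMonoidHom).comp (MonoidHom.id (U S)) := fun _ => rfl

def incl2 : BB S →* P2 S :=
  (SemidirectProduct.map (MonoidHom.id (U S)) (emb23 S) (compat2 S)).prodMap
    (MonoidHom.id (DJ S))

lemma compat3 : ∀ κ : K S, (MonoidHom.id (U S)).comp ((φK S κ).toMonoidHom)
    = ((φ3 S (emb32 S κ)).toMonoidHom).comp (MonoidHom.id (U S)) := fun _ => rfl

def incl3 : BB S →* P3 S :=
  (SemidirectProduct.map (MonoidHom.id (U S)) (emb32 S) (compat3 S)).prodMap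
    (MonoidHom.id (DJ S))

def dsplit (j : S.J) : DJ S →* (∀ x : Jm S j, ↥(HJ S x.1)) × S.LJ j where
  toFun d := (fun x => d x.1, ((d j : ↥(HJ S j)) : S.LJ j))
  map_one' := rfl
  map_mul' _ _ := rfl

def inclJ (j : S.J) : BB S →* PJ S j := (MonoidHom.id _).prodMap (dsplit S j)

/-! ### injectivity -/

lemma splitU_inj : Function.Injective (splitU S) := by
  intro u v h
  have h1 : ((u (om0 S) : ↥(H1 S)) : S.L1) = ((v (om0 S) : ↥(H1 S)) : S.L1) :=
    congrArg Prod.fst h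
  have h2 : (fun ω : Oma S => u ω.1) = (fun ω : Oma S => v ω.1) := congrArg Prod.snd h
  funext ω
  by_cases hω : ω = om0 S
  · subst hω; exact Subtype.coe_injective h1
  · exact congrFun h2 ⟨ω, hω⟩

lemma incl0_inj : Function.Injective (incl0 S) := by
  intro a b h
  have h1 := congrArg Prod.fst h
  have h2 := congrArg Prod.snd h
  refine Prod.ext (SemidirectProduct.ext ?_ ?_) h2
  · apply splitU_inj S
    have h3 := congrArg SemidirectProduct.left h1
    exact h3
  · have h3 := congrArg SemidirectProduct.right h1
    exact h3

lemma incl2_inj : Function.Injective (incl2 S) := by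
  intro a b h
  have h1 := congrArg Prod.fst h
  have h2 := congrArg Prod.snd h
  refine Prod.ext (SemidirectProduct.ext ?_ ?_) h2
  · have h3 := congrArg SemidirectProduct.left h1
    exact h3
  · have h3 := congrArg SemidirectProduct.right h1
    have h4 := congrArg Prod.fst h3
    have h5 := congrArg Prod.snd h3
    exact Prod.ext (Subtype.coe_injective h4) h5

lemma incl3_inj : Function.Injective (incl3 S) := by
  intro a b h
  have h1 := congrArg Prod.fst h
  have h2 := congrArg Prod.snd h
  refine Prod.ext (SemidirectProduct.ext ?_ ?_) h2
  · have h3 := congrArg SemidirectProduct.left h1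
    exact h3
  · have h3 := congrArg SemidirectProduct.right h1
    have h4 := congrArg Prod.fst h3
    have h5 := congrArg Prod.snd h3
    exact Prod.ext h4 (Subtype.coe_injective h5)

lemma inclJ_inj (j : S.J) : Function.Injective (inclJ S j) := by
  intro a b h
  have h1 := congrArg Prod.fst h
  have h2 := congrArg Prod.snd h
  refine Prod.ext h1 ?_
  funext x
  by_cases hx : x = j
  · subst hx; exact Subtype.coe_injective (congrArg Prod.snd h2)
  · exact congrFun (congrArg Prod.fst h2) ⟨x, hx⟩

/-! ### the projections ψ -/

def q0 : ((S.L1 × U' S) ⋊[φ0 S] K S) →* S.L1 where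
  toFun x := x.left.1
  map_one' := rfl
  map_mul' a b := by
    show ((a * b).left).1 = a.left.1 * b.left.1
    rw [SemidirectProduct.mul_left]
    show a.left.1 * (φ0 S a.right b.left).1 = _
    rw [φ0_fst]

def ψ0 : P0 S →* S.L1 := (q0 S).comp (MonoidHom.fst _ _)
def ψ2 : P2 S →* S.L2 :=
  (MonoidHom.fst S.L2 ↥(H3 S)).comp (SemidirectProduct.rightHom.comp (MonoidHom.fst _ _))
def ψ3 : P3 S →* S.L3 :=
  (MonoidHom.snd ↥(H2 S) S.L3).comp (SemidirectProduct.rightHom.comp (MonoidHom.fst _ _))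
def ψJ (j : S.J) : PJ S j →* S.LJ j := (MonoidHom.snd _ _).comp (MonoidHom.snd _ _)

lemma ψ0_surj : Function.Surjective (ψ0 S) := fun l => ⟨(⟨(l, 1), 1⟩, 1), rfl⟩
lemma ψ2_surj : Function.Surjective (ψ2 S) := fun g => ⟨(⟨1, (g, 1)⟩, 1), rfl⟩
lemma ψ3_surj : Function.Surjective (ψ3 S) := fun g => ⟨(⟨1, (1, g)⟩, 1), rfl⟩
lemma ψJ_surj (j : S.J) : Function.Surjective (ψJ S j) := fun g => ⟨(1, (1, g)), rfl⟩

/-! ### range identification -/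

lemma mem_range_incl0 (p : P0 S) : p ∈ (incl0 S).range ↔ ψ0 S p ∈ H1 S := by
  constructor
  · rintro ⟨b, rfl⟩
    exact (b.1.left (om0 S)).2
  · intro h
    obtain ⟨x, d⟩ := p
    refine ⟨(⟨fun ω => if hω : ω = om0 S then ⟨x.left.1, h⟩ else x.left.2 ⟨ω, hω⟩,
      x.right⟩, d), ?_⟩
    refine Prod.ext (SemidirectProduct.ext (Prod.ext ?_ ?_) rfl) rfl
    · show ((if hω : om0 S = om0 S then _ else _ : ↥(H1 S)) : S.L1) = x.left.1
      rw [dif_pos rfl]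
    · funext ω
      exact dif_neg ω.2
  
lemma mem_range_incl2 (p : P2 S) : p ∈ (incl2 S).range ↔ ψ2 S p ∈ H2 S := by
  constructor
  · rintro ⟨b, rfl⟩
    exact b.1.right.1.2
  · intro h
    obtain ⟨x, d⟩ := p
    exact ⟨(⟨x.left, (⟨x.right.1, h⟩, x.right.2)⟩, d), rfl⟩

lemma mem_range_incl3 (p : P3 S) : p ∈ (incl3 S).range ↔ ψ3 S p ∈ H3 S := by
  constructor
  · rintro ⟨b, rfl⟩
    exact b.1.right.2.2
  · intro h
    obtain ⟨x, d⟩ := p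
    exact ⟨(⟨x.left, (x.right.1, ⟨x.right.2, h⟩)⟩, d), rfl⟩

lemma mem_range_inclJ (j : S.J) (p : PJ S j) :
    p ∈ (inclJ S j).range ↔ ψJ S j p ∈ HJ S j := by
  constructor
  · rintro ⟨b, rfl⟩
    exact (b.2 j).2
  · intro h
    obtain ⟨x, d, g⟩ := p
    refine ⟨(x, fun i => if hi : i = j then hi ▸ ⟨g, h⟩ else d ⟨i, hi⟩), ?_⟩
    refine Prod.ext rfl (Prod.ext ?_ ?_)
    · funext i
      exact dif_neg i.2
    · show ((if hi : j = j then _ else _ : ↥(HJ S j)) : S.LJ j) = g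
      rw [dif_pos rfl]

/-! ### transitivity of the combined action on Ω -/

lemma reach (T : Set (Om S)) (h0 : om0 S ∈ T)
    (hc2 : ∀ (g : S.L2) ω, ω ∈ T → act2 S g ω ∈ T)
    (hc3 : ∀ (g : S.L3) ω, ω ∈ T → act3 S g ω ∈ T) : ∀ ω, ω ∈ T := by
  obtain ⟨g2, hg2⟩ := exists_moving (L := S.L2) S.y2
  obtain ⟨g3, hg3⟩ := exists_moving (L := S.L3) S.y3
  have step1 : ∀ n : ℕ, (((n : ZMod S.l), S.y2, S.y3) : Om S) ∈ T := by
    intro n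
    induction n with
    | zero => simpa [om0] using h0
    | succ n ih =>
      have t1 := hc2 g2 _ ih
      have e1 : act2 S g2 (((n : ZMod S.l), S.y2, S.y3) : Om S)
          = (((n : ZMod S.l) + 1, g2 • S.y2, S.y3) : Om S) := by
        simp [act2, ff, hg2]
      rw [e1] at t1
      have t2 := hc3 g3 _ t1
      have e2 : act3 S g3 (((n : ZMod S.l) + 1, g2 • S.y2, S.y3) : Om S)
          = (((n : ZMod S.l) + 1, g2 • S.y2, g3 • S.y3) : Om S) := rfl
      rw [e2] at t2
      have t3 := hc2 g2⁻¹ _ t2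
      have e3 : act2 S g2⁻¹ (((n : ZMod S.l) + 1, g2 • S.y2, g3 • S.y3) : Om S)
          = (((n : ZMod S.l) + 1, S.y2, g3 • S.y3) : Om S) := by
        simp [act2, ff, hg3, inv_smul_smul]
      rw [e3] at t3
      have t4 := hc3 g3⁻¹ _ t3
      have e4 : act3 S g3⁻¹ (((n : ZMod S.l) + 1, S.y2, g3 • S.y3) : Om S)
          = (((n : ZMod S.l) + 1, S.y2, S.y3) : Om S) := by
        simp [act3, inv_smul_smul]
      rw [e4] at t4
      simpa [Nat.cast_succ] using t4
  have step2 : ∀ a : ZMod S.l, ((a, S.y2, S.y3) : Om S) ∈ T := by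
    intro a
    obtain ⟨n, rfl⟩ := ZMod.natCast_zmod_surjective (n := S.l) a
    exact step1 n
  rintro ⟨a, x, y⟩
  obtain ⟨g, hg⟩ := exists_smul_eq S.L2 S.y2 x
  obtain ⟨h, hh⟩ := exists_smul_eq S.L3 S.y3 y
  have t1 := hc2 g _ (step2 (a - ff S x))
  have e1 : act2 S g ((a - ff S x, S.y2, S.y3) : Om S) = ((a, x, S.y3) : Om S) := by
    simp [act2, ff_y2, hg]
  rw [e1] at t1
  have t2 := hc3 h _ t1
  have e2 : act3 S h ((a, x, S.y3) : Om S) = ((a, x, y) : Om S) := by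
    simp [act3, hh]
  rw [e2] at t2
  exact t2

/-! ### the concrete faithfulness criterion -/

lemma faithful_concrete (N : Subgroup (BB S))
    (hJc : ∀ n ∈ N, ∀ j : S.J, Prod.snd n j = 1)
    (h2c : ∀ n ∈ N, (Prod.fst n).right.1 = 1)
    (h3c : ∀ n ∈ N, (Prod.fst n).right.2 = 1)
    (h0c : ∀ n ∈ N, (Prod.fst n).left (om0 S) = 1)
    (e2c : ∀ (g : S.L2) (u : U S), ((⟨⟨u, 1⟩, 1⟩ : BB S) ∈ N) →
      ((⟨⟨permAut (Om S) ↥(H1 S) (σ2 S g) u, 1⟩, 1⟩ : BB S) ∈ N))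
    (e3c : ∀ (g : S.L3) (u : U S), ((⟨⟨u, 1⟩, 1⟩ : BB S) ∈ N) →
      ((⟨⟨permAut (Om S) ↥(H1 S) (σ3 S g) u, 1⟩, 1⟩ : BB S) ∈ N)) :
    N = ⊥ := by
  set T : Set (Om S) := {ω | ∀ v : U S, ((⟨⟨v, 1⟩, 1⟩ : BB S) ∈ N) → v ω = 1} with hT
  have hTall : ∀ ω, ω ∈ T := by
    refine reach S T ?_ ?_ ?_
    · intro v hv
      exact h0c _ hv
    · intro g ω hω v hv
      have key := hω _ (e2c g⁻¹ v hv)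
      have : permAut (Om S) ↥(H1 S) (σ2 S g⁻¹) v ω = v (act2 S g ω) := by
        rw [permAut_apply, map_inv]
        rfl
      rwa [this] at key
    · intro g ω hω v hv
      have key := hω _ (e3c g⁻¹ v hv)
      have : permAut (Om S) ↥(H1 S) (σ3 S g⁻¹) v ω = v (act3 S g ω) := by
        rw [permAut_apply, map_inv]
        rfl
      rwa [this] at key
  rw [eq_bot_iff]
  intro n hn
  rw [Subgroup.mem_bot]
  have hd : n.2 = 1 := funext fun j => hJc n hn j
  have hκ : n.1.right = 1 := Prod.ext (h2c n hn) (h3c n hn)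
  have hform : n = (⟨⟨n.1.left, 1⟩, 1⟩ : BB S) := by
    refine Prod.ext (SemidirectProduct.ext rfl hκ) hd
  have hu : n.1.left = 1 := by
    funext ω
    exact hTall ω n.1.left (hform ▸ hn)
  rw [hform, hu]
  rfl

/-! ### the quotient identification -/

lemma quot_equiv {P L Y : Type} [Group P] [Group L] [MulAction L Y] [IsPretransitive L Y]
    (y : Y) (ψ : P →* L) (hs : Function.Surjective ψ) (R : Subgroup P)
    (hR : ∀ p, p ∈ R ↔ ψ p ∈ stabilizer L y) :
    ∃ e : (P ⧸ R) ≃ Y, ∀ (p : P) (x : P ⧸ R), e (p • x) = ψ p • e x := by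
  have sound : ∀ a b : P, (QuotientGroup.leftRel R) a b → ψ a • y = ψ b • y := by
    intro a b hab
    rw [QuotientGroup.leftRel_apply] at hab
    have := (hR _).mp hab
    rw [mem_stabilizer_iff, map_mul, map_inv, mul_smul] at this
    have := congrArg (ψ a • ·) this
    simpa [smul_smul] using this.symm
  let f : P ⧸ R → Y := Quotient.lift (fun p => ψ p • y) sound
  have hmk : ∀ p : P, f (QuotientGroup.mk p) = ψ p • y := fun p => rfl
  have hinj : Function.Injective f := by
    intro a b
    induction a using QuotientGroup.induction_on with | H a =>
    induction b using QuotientGroup.induction_on with | H b =>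
    intro hab
    rw [hmk, hmk] at hab
    have hmem : a⁻¹ * b ∈ R := by
      rw [hR, mem_stabilizer_iff, map_mul, map_inv, mul_smul, ← hab]
      simp
    exact Quotient.sound ((QuotientGroup.leftRel_apply).mpr hmem)
  have hsurj : Function.Surjective f := by
    intro y'
    obtain ⟨l, hl⟩ := exists_smul_eq L y y'
    obtain ⟨p, rfl⟩ := hs l
    exact ⟨QuotientGroup.mk p, hl⟩
  refine ⟨Equiv.ofBijective f ⟨hinj, hsurj⟩, ?_⟩
  intro p x
  induction x using QuotientGroup.induction_on with | H q =>
  show f (p • (QuotientGroup.mk q)) = ψ p • f (QuotientGroup.mk q)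
  rw [MulAction.Quotient.smul_mk, hmk, hmk]
  show ψ (p * q) • y = _
  rw [map_mul, mul_smul]

/-! ### cardinality -/


def decOm : DecidableEq (Om S) := fun a b => Classical.propDecidable (a = b)

def delta (h : ↥(H1 S)) (a : ZMod S.l) : BB S :=
  (⟨@Function.update _ _ (decOm S) (1 : U S) ((a, S.y2, S.y3) : Om S) h, 1⟩, 1)

lemma card_ge (hstar : ∃ h : ↥(H1 S), h ≠ 1) (fB : Fintype (BB S)) :
    S.l ≤ @Fintype.card (BB S) fB := by
  obtain ⟨h, hne⟩ := hstar
  have hinj : Function.Injective (delta S h) := by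
    intro a b hab
    by_contra hne'
    have h1 : (delta S h a).1.left ((a, S.y2, S.y3) : Om S)
        = (delta S h b).1.left ((a, S.y2, S.y3) : Om S) :=
      congrArg (fun z : BB S => z.1.left ((a, S.y2, S.y3) : Om S)) hab
    have hL : (delta S h a).1.left ((a, S.y2, S.y3) : Om S) = h := by
      show @Function.update _ _ (decOm S) (1 : U S) ((a, S.y2, S.y3) : Om S) h
        ((a, S.y2, S.y3) : Om S) = h
      exact @Function.update_self _ _ (decOm S) _ _ _
    have hR : (delta S h b).1.left ((a, S.y2, S.y3) : Om S) = 1 := by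
      show @Function.update _ _ (decOm S) (1 : U S) ((b, S.y2, S.y3) : Om S) h
        ((a, S.y2, S.y3) : Om S) = 1
      exact @Function.update_of_ne _ _ (decOm S) _ _ (fun hc => hne' (congrArg Prod.fst hc)) _ _
    exact hne ((hL.symm.trans h1).trans hR)
  calc S.l = Fintype.card (ZMod S.l) := (ZMod.card S.l).symm
    _ ≤ @Fintype.card (BB S) fB := @Fintype.card_le_of_injective _ _ _ fB _ hinj

/-! ### helper for the normality conditions -/

lemma cond_from_proj {B P L Y : Type} [Group B] [Group P] [Group L] [MulAction L Y]
    [FaithfulSMul L Y] [IsPretransitive L Y] (y : Y) (incl : B →* P) (ψq : P →* L)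
    (hs : Function.Surjective ψq) (N : Subgroup B) (hN : (N.map incl).Normal)
    (hmem : ∀ b : B, b ∈ N → ψq (incl b) ∈ stabilizer L y) :
    ∀ n ∈ N, ψq (incl n) = 1 := by
  have hnorm := hN.map ψq hs
  have hle : (N.map incl).map ψq ≤ stabilizer L y := by
    rintro x ⟨p, ⟨b, hb, rfl⟩, rfl⟩
    exact hmem b hb
  have hbot := normal_le_stab_eq_bot hnorm hle
  intro n hn
  have hx : ψq (incl n) ∈ (N.map incl).map ψq := ⟨incl n, ⟨n, hn, rfl⟩, rfl⟩
  rw [hbot] at hx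
  exact Subgroup.mem_bot.mp hx

/-! ### the conditions -/

def Cond0 (N : Subgroup (BB S)) : Prop :=
  ∀ n ∈ N, (Prod.fst n).left (om0 S) = 1

def Cond2 (N : Subgroup (BB S)) : Prop :=
  (∀ n ∈ N, (Prod.fst n).right.1 = 1) ∧
  (∀ (g : S.L2) (u : U S), ((⟨⟨u, 1⟩, 1⟩ : BB S) ∈ N) →
    ((⟨⟨permAut (Om S) ↥(H1 S) (σ2 S g) u, 1⟩, 1⟩ : BB S) ∈ N))

def Cond3 (N : Subgroup (BB S)) : Prop :=
  (∀ n ∈ N, (Prod.fst n).right.2 = 1) ∧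
  (∀ (g : S.L3) (u : U S), ((⟨⟨u, 1⟩, 1⟩ : BB S) ∈ N) →
    ((⟨⟨permAut (Om S) ↥(H1 S) (σ3 S g) u, 1⟩, 1⟩ : BB S) ∈ N))

def CondJ (j : S.J) (N : Subgroup (BB S)) : Prop := ∀ n ∈ N, Prod.snd n j = 1

/-! ### bundled pieces -/

structure Piece (B : Type) [Group B] (L Y : Type) [Group L] [MulAction L Y]
    (C : Subgroup B → Prop) where
  P : Type
  [grp : Group P]
  incl : B →* P
  inj : Function.Injective incl
  fin : Finite P
  cond : ∀ N : Subgroup B, (Subgroup.map incl N).Normal → C N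
  quot : ∃ (e : (P ⧸ incl.range) ≃ Y) (ψq : P →* L), Function.Surjective ψq ∧
    ∀ (p : P) (x : P ⧸ incl.range), e (p • x) = ψq p • e x

def Piece.mono {B : Type} [Group B] {L Y : Type} [Group L] [MulAction L Y]
    {C C' : Subgroup B → Prop} (h : ∀ N, C N → C' N) (pc : Piece B L Y C) :
    Piece B L Y C' :=
  { pc with cond := fun N hN => h N (pc.cond N hN) }

noncomputable def piece0 : Piece (BB S) S.L1 S.Y1 (Cond0 S) where
  P := P0 S
  incl := incl0 S
  inj := incl0_inj S
  fin := inferInstance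
  cond := by
    intro N hN n hn
    have key := cond_from_proj S.y1 (incl0 S) (ψ0 S) (ψ0_surj S) N hN
      (fun b _ => (b.1.left (om0 S)).2) n hn
    have key' : ((n.1.left (om0 S) : ↥(H1 S)) : S.L1) = 1 := key
    exact OneMemClass.coe_eq_one.mp key'
  quot := by
    obtain ⟨e, he⟩ := quot_equiv S.y1 (ψ0 S) (ψ0_surj S) (incl0 S).range
      (fun p => mem_range_incl0 S p)
    exact ⟨e, ψ0 S, ψ0_surj S, he⟩

noncomputable def piece2 : Piece (BB S) S.L2 S.Y2 (Cond2 S) where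
  P := P2 S
  incl := incl2 S
  inj := incl2_inj S
  fin := inferInstance
  cond := by
    intro N hN
    constructor
    · intro n hn
      have key := cond_from_proj S.y2 (incl2 S) (ψ2 S) (ψ2_surj S) N hN
        (fun b _ => b.1.right.1.2) n hn
      have key' : ((n.1.right.1 : ↥(H2 S)) : S.L2) = 1 := key
      exact OneMemClass.coe_eq_one.mp key'
    · intro g u hu
      have hmem : incl2 S (⟨⟨u, 1⟩, 1⟩ : BB S) ∈ N.map (incl2 S) := ⟨_, hu, rfl⟩
      have hconj := hN.conj_mem _ hmem ((SemidirectProduct.inr ((g, 1) : S.L2 × ↥(H3 S)), 1) : P2 S)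
      set w : P2 S := ((SemidirectProduct.inr ((g, 1) : S.L2 × ↥(H3 S)), 1) : P2 S) with hw
      have hφ : φ2 S ((g, (1 : ↥(H3 S)))) u = permAut (Om S) ↥(H1 S) (σ2 S g) u := by
        have h1 : hom23 S ((g, (1 : ↥(H3 S)))) = σ2 S g := by
          show σ2 S g * σ3 S ((1 : ↥(H3 S)) : S.L3) = σ2 S g
          rw [OneMemClass.coe_one, map_one, mul_one]
        show permAut (Om S) ↥(H1 S) (hom23 S ((g, (1 : ↥(H3 S))))) u = _
        rw [h1]
      have hcalc : w * incl2 S (⟨⟨u, 1⟩, 1⟩ : BB S) * w⁻¹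
          = incl2 S (⟨⟨permAut (Om S) ↥(H1 S) (σ2 S g) u, 1⟩, 1⟩ : BB S) := by
        refine Prod.ext ?_ ?_
        · show SemidirectProduct.inr ((g, 1) : S.L2 × ↥(H3 S)) * SemidirectProduct.inl u
              * (SemidirectProduct.inr ((g, 1) : S.L2 × ↥(H3 S)))⁻¹
            = SemidirectProduct.inl (permAut (Om S) ↥(H1 S) (σ2 S g) u)
          rw [← hφ, ← map_inv, ← SemidirectProduct.inl_aut]
        · show 1 * 1 * 1⁻¹ = 1
          simp
      rw [hcalc] at hconj
      obtain ⟨b, hb, hbe⟩ := hconj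
      rwa [incl2_inj S hbe] at hb
  quot := by
    obtain ⟨e, he⟩ := quot_equiv S.y2 (ψ2 S) (ψ2_surj S) (incl2 S).range
      (fun p => mem_range_incl2 S p)
    exact ⟨e, ψ2 S, ψ2_surj S, he⟩

noncomputable def piece3 : Piece (BB S) S.L3 S.Y3 (Cond3 S) where
  P := P3 S
  incl := incl3 S
  inj := incl3_inj S
  fin := inferInstance
  cond := by
    intro N hN
    constructor
    · intro n hn
      have key := cond_from_proj S.y3 (incl3 S) (ψ3 S) (ψ3_surj S) N hN
        (fun b _ => b.1.right.2.2) n hn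
      have key' : ((n.1.right.2 : ↥(H3 S)) : S.L3) = 1 := key
      exact OneMemClass.coe_eq_one.mp key'
    · intro g u hu
      have hmem : incl3 S (⟨⟨u, 1⟩, 1⟩ : BB S) ∈ N.map (incl3 S) := ⟨_, hu, rfl⟩
      have hconj := hN.conj_mem _ hmem ((SemidirectProduct.inr ((1, g) : ↥(H2 S) × S.L3), 1) : P3 S)
      set w : P3 S := ((SemidirectProduct.inr ((1, g) : ↥(H2 S) × S.L3), 1) : P3 S) with hw
      have hφ : φ3 S (((1 : ↥(H2 S)), g)) u = permAut (Om S) ↥(H1 S) (σ3 S g) u := by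
        have h1 : hom32 S (((1 : ↥(H2 S)), g)) = σ3 S g := by
          show σ2 S ((1 : ↥(H2 S)) : S.L2) * σ3 S g = σ3 S g
          rw [OneMemClass.coe_one, map_one, one_mul]
        show permAut (Om S) ↥(H1 S) (hom32 S (((1 : ↥(H2 S)), g))) u = _
        rw [h1]
      have hcalc : w * incl3 S (⟨⟨u, 1⟩, 1⟩ : BB S) * w⁻¹
          = incl3 S (⟨⟨permAut (Om S) ↥(H1 S) (σ3 S g) u, 1⟩, 1⟩ : BB S) := by
        refine Prod.ext ?_ ?_
        · show SemidirectProduct.inr ((1, g) : ↥(H2 S) × S.L3) * SemidirectProduct.inl u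
              * (SemidirectProduct.inr ((1, g) : ↥(H2 S) × S.L3))⁻¹
            = SemidirectProduct.inl (permAut (Om S) ↥(H1 S) (σ3 S g) u)
          rw [← hφ, ← map_inv, ← SemidirectProduct.inl_aut]
        · show 1 * 1 * 1⁻¹ = 1
          simp
      rw [hcalc] at hconj
      obtain ⟨b, hb, hbe⟩ := hconj
      rwa [incl3_inj S hbe] at hb
  quot := by
    obtain ⟨e, he⟩ := quot_equiv S.y3 (ψ3 S) (ψ3_surj S) (incl3 S).range
      (fun p => mem_range_incl3 S p)
    exact ⟨e, ψ3 S, ψ3_surj S, he⟩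

noncomputable def pieceJ (j : S.J) : Piece (BB S) (S.LJ j) (S.YJ j) (CondJ S j) where
  P := PJ S j
  incl := inclJ S j
  inj := inclJ_inj S j
  fin := inferInstance
  cond := by
    intro N hN n hn
    have key := cond_from_proj (S.yJ j) (inclJ S j) (ψJ S j) (ψJ_surj S j) N hN
      (fun b _ => (b.2 j).2) n hn
    have key' : ((n.2 j : ↥(HJ S j)) : S.LJ j) = 1 := key
    exact OneMemClass.coe_eq_one.mp key'
  quot := by
    obtain ⟨e, he⟩ := quot_equiv (S.yJ j) (ψJ S j) (ψJ_surj S j) (inclJ S j).range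
      (fun p => mem_range_inclJ S j p)
    exact ⟨e, ψJ S j, ψJ_surj S j, he⟩

end

end Stmt16Aux

open Stmt16Aux in
/-- Theorem 1.7, hard direction: if `k ≥ 3` and `L₁,…,L_k` are nontrivial finite transitive
permutation groups with `L₁` not regular, then for every `c` there is a rank-`k` faithful
amalgam of permutation type `[L₁,…,L_k]` whose Borel subgroup has order at least `c`.
An amalgam is encoded by finite groups `P i` with a common subgroup `B` (via injective
inclusions); faithfulness says only the trivial subgroup of `B` is normalised by every `P i`;
the permutation type condition says the action of `P i` on the cosets of `B` is permutation
isomorphic, along a surjection `ψ i : P i →* L i`, to the action of `L i` on `Ω i`. -/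
theorem stmt16 (k : ℕ) (hk : 3 ≤ k) (Li : Fin k → Type) (Ωi : Fin k → Type)
    [∀ i, Group (Li i)] [∀ i, MulAction (Li i) (Ωi i)] [∀ i, Fintype (Ωi i)]
    [∀ i, FaithfulSMul (Li i) (Ωi i)] [∀ i, MulAction.IsPretransitive (Li i) (Ωi i)]
    [∀ i, Finite (Li i)]
    (hnontriv : ∀ i, Nontrivial (Li i))
    (i₀ : Fin k) (hi₀ : (i₀ : ℕ) = 0)
    (hnotreg : ∃ x : Ωi i₀, MulAction.stabilizer (Li i₀) x ≠ ⊥)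
    (c : ℕ) :
    ∃ (P : Fin k → Type) (gP : ∀ i, Group (P i)) (B : Type) (gB : Group B) (fB : Fintype B)
      (incl : ∀ i, B →* P i),
      (∀ i, Function.Injective (incl i)) ∧ (∀ i, Finite (P i)) ∧
      (∀ N : Subgroup B, (∀ i, (N.map (incl i)).Normal) → N = ⊥) ∧
      (∀ i, ∃ (e : (P i ⧸ (incl i).range) ≃ Ωi i) (ψ : P i →* Li i),
        Function.Surjective ψ ∧
        ∀ (p : P i) (x : P i ⧸ (incl i).range), e (p • x) = ψ p • e x) ∧
      c ≤ Fintype.card B := by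
  classical
  have hNY : ∀ i, Nontrivial (Ωi i) := fun i => nontrivial_Y (hnontriv i)
  have hne : ∀ i, Nonempty (Ωi i) := fun i => (hNY i).to_nonempty
  have base : ∀ i, Ωi i := fun i => (hne i).some
  have h1k : 1 < k := by omega
  have h2k : 2 < k := by omega
  let S : Setup :=
    { L1 := Li i₀, Y1 := Ωi i₀, L2 := Li ⟨1, h1k⟩, Y2 := Ωi ⟨1, h1k⟩,
      L3 := Li ⟨2, h2k⟩, Y3 := Ωi ⟨2, h2k⟩,
      ny2 := hNY ⟨1, h1k⟩, ny3 := hNY ⟨2, h2k⟩,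
      y1 := base i₀, y2 := base ⟨1, h1k⟩, y3 := base ⟨2, h2k⟩,
      l := c + 1,
      J := {j : Fin k // 3 ≤ (j : ℕ)},
      LJ := fun j => Li j.1, YJ := fun j => Ωi j.1,
      yJ := fun j => base j.1 }
  set Cond : Fin k → Subgroup (BB S) → Prop := fun i N =>
    if (i : ℕ) = 0 then Cond0 S N
    else if (i : ℕ) = 1 then Cond2 S N
    else if (i : ℕ) = 2 then Cond3 S N
    else if h : 3 ≤ (i : ℕ) then CondJ S ⟨i, h⟩ N
    else True
    with hCond
  have hpc : ∀ i, Nonempty (Piece (BB S) (Li i) (Ωi i) (Cond i)) := by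
    intro i
    by_cases h0 : (i : ℕ) = 0
    · obtain rfl : i = i₀ := Fin.ext (h0.trans hi₀.symm)
      refine ⟨(piece0 S).mono ?_⟩
      intro N hC
      simp only [hCond]
      rwa [if_pos h0]
    · by_cases h1 : (i : ℕ) = 1
      · obtain rfl : i = (⟨1, h1k⟩ : Fin k) := Fin.ext h1
        refine ⟨(piece2 S).mono ?_⟩
        intro N hC
        simp only [hCond]
        simpa using hC
      · by_cases h2 : (i : ℕ) = 2
        · obtain rfl : i = (⟨2, h2k⟩ : Fin k) := Fin.ext h2
          refine ⟨(piece3 S).mono ?_⟩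
          intro N hC
          simp only [hCond]
          simpa using hC
        · have h3 : 3 ≤ (i : ℕ) := by omega
          refine ⟨(pieceJ S ⟨i, h3⟩).mono ?_⟩
          intro N hC
          simp only [hCond]
          rwa [if_neg h0, if_neg h1, if_neg h2, dif_pos h3]
  have hstar : ∃ h : ↥(H1 S), h ≠ 1 := by
    obtain ⟨x, hx⟩ := hnotreg
    obtain ⟨⟨s, hs⟩, hsne⟩ := Subgroup.ne_bot_iff_exists_ne_one.mp hx
    obtain ⟨g, hg⟩ := MulAction.exists_smul_eq (Li i₀) x (base i₀)
    have hs' : s • x = x := hs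
    refine ⟨⟨g * s * g⁻¹, ?_⟩, ?_⟩
    · show (g * s * g⁻¹) • (base i₀) = base i₀
      rw [← hg, mul_smul, mul_smul, inv_smul_smul, hs']
    · intro h1
      have h2 : g * s * g⁻¹ = 1 := congrArg Subtype.val h1
      have hs1 : s = 1 := by
        have : s = g⁻¹ * (g * s * g⁻¹) * g := by group
        rw [h2] at this
        simpa using this
      exact hsne (Subtype.ext hs1)
  refine ⟨fun i => ((hpc i).some).P, fun i => ((hpc i).some).grp, BB S, inferInstance,
    Fintype.ofFinite _, fun i => ((hpc i).some).incl, fun i => ((hpc i).some).inj,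
    fun i => ((hpc i).some).fin, ?_, fun i => ((hpc i).some).quot, ?_⟩
  · intro N hN
    have hgen : ∀ i, Cond i N := fun i => ((hpc i).some).cond N (hN i)
    have hC0 : Cond0 S N := by
      have h := hgen i₀
      simp only [hCond] at h
      rwa [if_pos hi₀] at h
    have hC2 : Cond2 S N := by
      have h := hgen ⟨1, h1k⟩
      simp only [hCond] at h
      simpa using h
    have hC3 : Cond3 S N := by
      have h := hgen ⟨2, h2k⟩
      simp only [hCond] at h
      simpa using h
    have hCJ : ∀ j : S.J, CondJ S j N := by
      intro j
      have h := hgen j.1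
      simp only [hCond] at h
      rwa [if_neg (by omega), if_neg (by have := j.2; omega), if_neg (by have := j.2; omega),
        dif_pos j.2] at h
    exact faithful_concrete S N (fun n hn j => hCJ j n hn) hC2.1 hC3.1 hC0
      hC2.2 hC3.2
  · exact le_trans (Nat.le_succ c) (card_ge S hstar _)
end

section
/- Let 𝔗 be a connected bi-regular graph (every vertex in one part of the bipartition has valency d₁ ≥ 1 and every vertex in the other part has valency d₂ ≥ 1), and let K ≤ Aut(𝔗) be a group of automorphisms such that the quotient graph 𝔗/K is bi-regular with the same valencies d₁, d₂ (i.e., K maps no two distinct neighbours of any vertex to the same K-orbit). Then K acts semiregularly on the vertices of 𝔗. -/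
/-- If `𝔗` is a connected bi-regular graph and `K` a group of automorphisms such that the
quotient graph is bi-regular with the same valencies (i.e. no two distinct neighbours of a
vertex lie in the same `K`-orbit), then `K` is semiregular on the vertices. -/
theorem stmt18 {V : Type*} (Γ : SimpleGraph V) (hconn : Γ.Connected)
    [∀ v, Fintype (Γ.neighborSet v)]
    (part : V → Bool) (hbip : ∀ a b : V, Γ.Adj a b → part a ≠ part b)
    (d₁ d₂ : ℕ) (hd₁ : 1 ≤ d₁) (hd₂ : 1 ≤ d₂)
    (hdeg : ∀ v : V, Γ.degree v = if part v then d₁ else d₂)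
    {K : Type*} [Group K] [MulAction K V]
    (hact : ∀ (g : K) (a b : V), Γ.Adj a b → Γ.Adj (g • a) (g • b))
    (hfaith : ∀ g : K, (∀ v : V, g • v = v) → g = 1)
    (hquot : ∀ (v a b : V), Γ.Adj v a → Γ.Adj v b → a ≠ b →
      MulAction.orbit K a ≠ MulAction.orbit K b) :
    ∀ g : K, (∃ v : V, g • v = v) → g = 1 := by
  intro g hg
  obtain ⟨v, hv⟩ := hg
  have key : ∀ a b : V, Γ.Adj a b → g • a = a → g • b = b := by
    intro a b hab ha
    by_contra hne
    have h1 : Γ.Adj a (g • b) := by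
      have := hact g a b hab
      rwa [ha] at this
    exact hquot a b (g • b) hab h1 (Ne.symm hne) (MulAction.orbit_smul g b).symm
  have walk : ∀ a b : V, Γ.Walk a b → g • a = a → g • b = b := by
    intro a b p
    induction p with
    | nil => exact id
    | cons h _ ih => exact fun ha => ih (key _ _ h ha)
  exact hfaith g fun w => walk v w (hconn v w).some hv
end
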